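/- arXiv:1309.3034 — 5 statements merged into one kernel-verified Lean document; each statement's English description precedes it below -/
import Mathlib

section
/- Let Ȳ ≠ 0 and A₄, B₄, C₄, D₄, E₄ be real numbers with B₄ > 0, Ȳ² + A₄ > 0, and Δ = B₄(Ȳ² + A₄) − E₄² > 0. Define M₄(K₁, K₂) = Ȳ²(K₁ − 1)² + K₁²A₄ + K₂²B₄ − 2K₁C₄ + 2K₂D₄ − 2K₁K₂E₄, and let K₁* = (B₄(Ȳ² + C₄) − D₄E₄)/Δ and K₂* = (E₄(Ȳ² + C₄) − D₄(Ȳ² + A₄))/Δ. Then the minimum value of M₄ over ℝ² equals Ȳ² − (Ȳ² + C₄)K₁* + D₄K₂*. -/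
/-- With K₁* = (B₄(Ȳ² + C₄) − D₄E₄)/Δ and
K₂* = (E₄(Ȳ² + C₄) − D₄(Ȳ² + A₄))/Δ, the minimum value of
M₄(K₁,K₂) = Ȳ²(K₁−1)² + K₁²A₄ + K₂²B₄ − 2K₁C₄ + 2K₂D₄ − 2K₁K₂E₄ over ℝ²
equals Ȳ² − (Ȳ² + C₄)K₁* + D₄K₂*. -/
theorem t4_mse_min_value (Ybar A4 B4 C4 D4 E4 : ℝ) (hY : Ybar ≠ 0) (hB : 0 < B4)
    (hA : 0 < Ybar ^ 2 + A4) (hΔ : 0 < B4 * (Ybar ^ 2 + A4) - E4 ^ 2)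
    (M : ℝ → ℝ → ℝ)
    (hM : ∀ K1 K2, M K1 K2 = Ybar ^ 2 * (K1 - 1) ^ 2 + K1 ^ 2 * A4 + K2 ^ 2 * B4
      - 2 * K1 * C4 + 2 * K2 * D4 - 2 * K1 * K2 * E4)
    (K1s K2s : ℝ)
    (hK1 : K1s = (B4 * (Ybar ^ 2 + C4) - D4 * E4) / (B4 * (Ybar ^ 2 + A4) - E4 ^ 2))
    (hK2 : K2s = (E4 * (Ybar ^ 2 + C4) - D4 * (Ybar ^ 2 + A4)) /
      (B4 * (Ybar ^ 2 + A4) - E4 ^ 2)) :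
    IsLeast (Set.range fun p : ℝ × ℝ => M p.1 p.2)
      (Ybar ^ 2 - (Ybar ^ 2 + C4) * K1s + D4 * K2s) := by
  have hd : B4 * (Ybar ^ 2 + A4) - E4 ^ 2 ≠ 0 := ne_of_gt hΔ
  have h1 : K1s * (B4 * (Ybar ^ 2 + A4) - E4 ^ 2) = B4 * (Ybar ^ 2 + C4) - D4 * E4 := by
    rw [hK1]; field_simp
  have h2 : K2s * (B4 * (Ybar ^ 2 + A4) - E4 ^ 2) = E4 * (Ybar ^ 2 + C4) - D4 * (Ybar ^ 2 + A4) := by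
    rw [hK2, div_mul_cancel₀]; exact hd
  have hs1 : (Ybar ^ 2 + A4) * K1s - E4 * K2s = Ybar ^ 2 + C4 := by
    apply mul_right_cancel₀ hd; linear_combination (Ybar ^ 2 + A4) * h1 - E4 * h2
  have hs2 : B4 * K2s - E4 * K1s = -D4 := by
    rw [hK1, hK2]; field_simp; ring
  constructor
  · refine ⟨(K1s, K2s), ?_⟩
    show M K1s K2s = _
    rw [hM]
    linear_combination K1s * hs1 + K2s * hs2
  · rintro y ⟨⟨K1, K2⟩, rfl⟩
    simp only [hM]
    have key : Ybar ^ 2 * (K1 - 1) ^ 2 + K1 ^ 2 * A4 + K2 ^ 2 * B4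
        - 2 * K1 * C4 + 2 * K2 * D4 - 2 * K1 * K2 * E4
        - (Ybar ^ 2 - (Ybar ^ 2 + C4) * K1s + D4 * K2s)
        = (Ybar ^ 2 + A4) * (K1 - K1s) ^ 2 - 2 * E4 * (K1 - K1s) * (K2 - K2s)
          + B4 * (K2 - K2s) ^ 2 := by
      linear_combination (2 * K1 - K1s) * hs1 + (2 * K2 - K2s) * hs2
    nlinarith [sq_nonneg ((Ybar ^ 2 + A4) * (K1 - K1s) - E4 * (K2 - K2s)),
      hA, mul_nonneg hΔ.le (sq_nonneg (K2 - K2s)), key]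
end

section
/- Let Ȳ ≠ 0 and A₅, B₅, C₅, D₅ be real numbers with B₅ > 0, Ȳ² + A₅ > 0, and B₅(Ȳ² + A₅) − D₅² > 0. Define M₅(K₁, K₂) = Ȳ²(K₁ − 1)² + K₁²A₅ + K₂²B₅ + 2K₁C₅ − 2K₁K₂D₅. Then M₅ attains its unique global minimum over ℝ² at K₁* = B₅(Ȳ² − C₅)/(B₅(Ȳ² + A₅) − D₅²) and K₂* = D₅(Ȳ² − C₅)/(B₅(Ȳ² + A₅) − D₅²). -/
/-- M₅(K₁,K₂) = Ȳ²(K₁−1)² + K₁²A₅ + K₂²B₅ + 2K₁C₅ − 2K₁K₂D₅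
attains its unique global minimum at
K₁* = B₅(Ȳ² − C₅)/(B₅(Ȳ² + A₅) − D₅²),
K₂* = D₅(Ȳ² − C₅)/(B₅(Ȳ² + A₅) − D₅²). -/
theorem t5_mse_min (Ybar A5 B5 C5 D5 : ℝ) (hY : Ybar ≠ 0) (hB : 0 < B5)
    (hA : 0 < Ybar ^ 2 + A5) (hΔ : 0 < B5 * (Ybar ^ 2 + A5) - D5 ^ 2)
    (M : ℝ → ℝ → ℝ)
    (hM : ∀ K1 K2, M K1 K2 = Ybar ^ 2 * (K1 - 1) ^ 2 + K1 ^ 2 * A5 + K2 ^ 2 * B5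
      + 2 * K1 * C5 - 2 * K1 * K2 * D5)
    (K1s K2s : ℝ)
    (hK1 : K1s = B5 * (Ybar ^ 2 - C5) / (B5 * (Ybar ^ 2 + A5) - D5 ^ 2))
    (hK2 : K2s = D5 * (Ybar ^ 2 - C5) / (B5 * (Ybar ^ 2 + A5) - D5 ^ 2)) :
    (∀ K1 K2, M K1s K2s ≤ M K1 K2) ∧
    (∀ K1 K2, M K1 K2 = M K1s K2s → K1 = K1s ∧ K2 = K2s) := by
  have hΔ' : B5 * (Ybar ^ 2 + A5) - D5 ^ 2 ≠ 0 := ne_of_gt hΔ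
  have hB' : B5 ≠ 0 := ne_of_gt hB
  have key : ∀ K1 K2, M K1 K2 - M K1s K2s =
      (B5 * (Ybar ^ 2 + A5) - D5 ^ 2) / B5 * (K1 - K1s) ^ 2
      + B5 * (K2 - D5 / B5 * K1) ^ 2 := by
    intro K1 K2
    rw [hM, hM, hK1, hK2]
    field_simp
    ring
  constructor
  · intro K1 K2
    have h := key K1 K2
    have h1 : 0 ≤ (B5 * (Ybar ^ 2 + A5) - D5 ^ 2) / B5 * (K1 - K1s) ^ 2 :=
      mul_nonneg (le_of_lt (div_pos hΔ hB)) (sq_nonneg _)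
    have h2 : 0 ≤ B5 * (K2 - D5 / B5 * K1) ^ 2 := mul_nonneg hB.le (sq_nonneg _)
    linarith
  · intro K1 K2 hEq
    have h := key K1 K2
    rw [hEq, sub_self] at h
    have h1 : 0 ≤ (B5 * (Ybar ^ 2 + A5) - D5 ^ 2) / B5 * (K1 - K1s) ^ 2 :=
      mul_nonneg (le_of_lt (div_pos hΔ hB)) (sq_nonneg _)
    have h2 : 0 ≤ B5 * (K2 - D5 / B5 * K1) ^ 2 := mul_nonneg hB.le (sq_nonneg _)
    have e1 : (K1 - K1s) ^ 2 = 0 := by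
      have := div_pos hΔ hB
      nlinarith [sq_nonneg (K1 - K1s), sq_nonneg (K2 - D5 / B5 * K1)]
    have e2 : (K2 - D5 / B5 * K1) ^ 2 = 0 := by nlinarith [sq_nonneg (K1 - K1s)]
    have hk1 : K1 = K1s := by
      have := pow_eq_zero_iff (n := 2) (by norm_num) |>.mp e1
      linarith
    refine ⟨hk1, ?_⟩
    have := pow_eq_zero_iff (n := 2) (by norm_num) |>.mp e2
    have : K2 = D5 / B5 * K1 := by linarith
    rw [this, hk1, hK1, hK2]
    field_simp
end

section
/- Let Ȳ ≠ 0 and A₅, B₅, C₅, D₅ be real numbers with B₅ > 0, Ȳ² + A₅ > 0, and Δ = B₅(Ȳ² + A₅) − D₅² > 0. Define M₅(K₁, K₂) = Ȳ²(K₁ − 1)² + K₁²A₅ + K₂²B₅ + 2K₁C₅ − 2K₁K₂D₅. Then the minimum value of M₅ over ℝ² equals Ȳ² − B₅(Ȳ² − C₅)²/Δ. -/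
/-- The minimum value of
M₅(K₁,K₂) = Ȳ²(K₁−1)² + K₁²A₅ + K₂²B₅ + 2K₁C₅ − 2K₁K₂D₅ over ℝ²
equals Ȳ² − B₅(Ȳ² − C₅)²/Δ, where Δ = B₅(Ȳ² + A₅) − D₅². -/
theorem t5_mse_min_value (Ybar A5 B5 C5 D5 : ℝ) (hY : Ybar ≠ 0) (hB : 0 < B5)
    (hA : 0 < Ybar ^ 2 + A5) (hΔ : 0 < B5 * (Ybar ^ 2 + A5) - D5 ^ 2)
    (M : ℝ → ℝ → ℝ)
    (hM : ∀ K1 K2, M K1 K2 = Ybar ^ 2 * (K1 - 1) ^ 2 + K1 ^ 2 * A5 + K2 ^ 2 * B5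
      + 2 * K1 * C5 - 2 * K1 * K2 * D5) :
    IsLeast (Set.range fun p : ℝ × ℝ => M p.1 p.2)
      (Ybar ^ 2 - B5 * (Ybar ^ 2 - C5) ^ 2 / (B5 * (Ybar ^ 2 + A5) - D5 ^ 2)) := by
  set Δ := B5 * (Ybar ^ 2 + A5) - D5 ^ 2 with hΔdef
  have hΔne : Δ ≠ 0 := ne_of_gt hΔ
  have hBne : B5 ≠ 0 := ne_of_gt hB
  constructor
  · refine ⟨(B5 * (Ybar ^ 2 - C5) / Δ, D5 * (Ybar ^ 2 - C5) / Δ), ?_⟩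
    simp only [hM]
    field_simp
    ring
  · rintro x ⟨⟨K1, K2⟩, rfl⟩
    simp only [hM]
    have key : Ybar ^ 2 * (K1 - 1) ^ 2 + K1 ^ 2 * A5 + K2 ^ 2 * B5
        + 2 * K1 * C5 - 2 * K1 * K2 * D5
        - (Ybar ^ 2 - B5 * (Ybar ^ 2 - C5) ^ 2 / Δ)
        = (B5 * K2 - D5 * K1) ^ 2 / B5
          + (Δ * K1 - B5 * (Ybar ^ 2 - C5)) ^ 2 / (B5 * Δ) := by
      rw [hΔdef]
      have hΔne' : B5 * (Ybar ^ 2 + A5) - D5 ^ 2 ≠ 0 := ne_of_gt hΔ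
      field_simp
      ring
    have h1 : 0 ≤ (B5 * K2 - D5 * K1) ^ 2 / B5 := div_nonneg (sq_nonneg _) hB.le
    have h2 : 0 ≤ (Δ * K1 - B5 * (Ybar ^ 2 - C5)) ^ 2 / (B5 * Δ) :=
      div_nonneg (sq_nonneg _) (mul_pos hB hΔ).le
    linarith
end

section
/- Let Ȳ ≠ 0 and A₆, B₆, C₆, D₆ be real numbers with B₆ > 0, Ȳ² + A₆ > 0, and B₆(Ȳ² + A₆) − D₆² > 0. Define M₆(K₁, K₂) = Ȳ²(K₁ − 1)² + K₁²A₆ + K₂²B₆ − 2K₁C₆ − 2K₁K₂D₆. Then M₆ attains its unique global minimum over ℝ² at K₁* = B₆(Ȳ² + C₆)/(B₆(Ȳ² + A₆) − D₆²) and K₂* = D₆(Ȳ² + C₆)/(B₆(Ȳ² + A₆) − D₆²). -/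
/-- M₆(K₁,K₂) = Ȳ²(K₁−1)² + K₁²A₆ + K₂²B₆ − 2K₁C₆ − 2K₁K₂D₆
attains its unique global minimum at
K₁* = B₆(Ȳ² + C₆)/(B₆(Ȳ² + A₆) − D₆²),
K₂* = D₆(Ȳ² + C₆)/(B₆(Ȳ² + A₆) − D₆²). -/
theorem t6_mse_min (Ybar A6 B6 C6 D6 : ℝ) (hY : Ybar ≠ 0) (hB : 0 < B6)
    (hA : 0 < Ybar ^ 2 + A6) (hΔ : 0 < B6 * (Ybar ^ 2 + A6) - D6 ^ 2)
    (M : ℝ → ℝ → ℝ)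
    (hM : ∀ K1 K2, M K1 K2 = Ybar ^ 2 * (K1 - 1) ^ 2 + K1 ^ 2 * A6 + K2 ^ 2 * B6
      - 2 * K1 * C6 - 2 * K1 * K2 * D6)
    (K1s K2s : ℝ)
    (hK1 : K1s = B6 * (Ybar ^ 2 + C6) / (B6 * (Ybar ^ 2 + A6) - D6 ^ 2))
    (hK2 : K2s = D6 * (Ybar ^ 2 + C6) / (B6 * (Ybar ^ 2 + A6) - D6 ^ 2)) :
    (∀ K1 K2, M K1s K2s ≤ M K1 K2) ∧
    (∀ K1 K2, M K1 K2 = M K1s K2s → K1 = K1s ∧ K2 = K2s) := by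
  have hΔ' : B6 * (Ybar ^ 2 + A6) - D6 ^ 2 ≠ 0 := ne_of_gt hΔ
  have key : ∀ K1 K2, M K1 K2 - M K1s K2s =
      (Ybar ^ 2 + A6) * (K1 - K1s) ^ 2 - 2 * D6 * (K1 - K1s) * (K2 - K2s)
        + B6 * (K2 - K2s) ^ 2 := by
    intro K1 K2
    rw [hM, hM, hK1, hK2]
    field_simp
    ring
  have pos : ∀ u v : ℝ,
      0 ≤ (Ybar ^ 2 + A6) * u ^ 2 - 2 * D6 * u * v + B6 * v ^ 2 := by
    intro u v
    nlinarith [sq_nonneg (B6 * v - D6 * u), sq_nonneg u, hB.le, hΔ.le,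
      mul_nonneg hΔ.le (sq_nonneg u)]
  constructor
  · intro K1 K2
    have := key K1 K2
    have := pos (K1 - K1s) (K2 - K2s)
    linarith
  · intro K1 K2 hEq
    have h0 : (Ybar ^ 2 + A6) * (K1 - K1s) ^ 2
        - 2 * D6 * (K1 - K1s) * (K2 - K2s) + B6 * (K2 - K2s) ^ 2 = 0 := by
      have := key K1 K2
      linarith
    have hu2 : (K1 - K1s) ^ 2 = 0 := by
      refine le_antisymm ?_ (sq_nonneg _)
      nlinarith [sq_nonneg (B6 * (K2 - K2s) - D6 * (K1 - K1s)), hΔ, hB]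
    have hu : K1 - K1s = 0 := by
      exact pow_eq_zero_iff two_ne_zero |>.mp hu2
    have hv2 : (K2 - K2s) ^ 2 = 0 := by
      rw [hu] at h0
      refine le_antisymm ?_ (sq_nonneg _)
      nlinarith [sq_nonneg (K2 - K2s)]
    have hv : K2 - K2s = 0 := pow_eq_zero_iff two_ne_zero |>.mp hv2
    exact ⟨sub_eq_zero.mp hu, sub_eq_zero.mp hv⟩
end

section
/- Let Ȳ ≠ 0 and A₆, B₆, C₆, D₆ be real numbers with B₆ > 0, Ȳ² + A₆ > 0, and Δ = B₆(Ȳ² + A₆) − D₆² > 0. Define M₆(K₁, K₂) = Ȳ²(K₁ − 1)² + K₁²A₆ + K₂²B₆ − 2K₁C₆ − 2K₁K₂D₆. Then the minimum value of M₆ over ℝ² equals Ȳ² − B₆(Ȳ² + C₆)²/Δ; in particular, the minimum value is strictly less than Ȳ² whenever Ȳ² + C₆ ≠ 0. -/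
/-- The minimum value of
M₆(K₁,K₂) = Ȳ²(K₁−1)² + K₁²A₆ + K₂²B₆ − 2K₁C₆ − 2K₁K₂D₆ over ℝ²
equals Ȳ² − B₆(Ȳ² + C₆)²/Δ with Δ = B₆(Ȳ² + A₆) − D₆²; moreover it is strictly
less than Ȳ² whenever Ȳ² + C₆ ≠ 0. -/
theorem t6_mse_min_value (Ybar A6 B6 C6 D6 : ℝ) (hY : Ybar ≠ 0) (hB : 0 < B6)
    (hA : 0 < Ybar ^ 2 + A6) (hΔ : 0 < B6 * (Ybar ^ 2 + A6) - D6 ^ 2)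
    (M : ℝ → ℝ → ℝ)
    (hM : ∀ K1 K2, M K1 K2 = Ybar ^ 2 * (K1 - 1) ^ 2 + K1 ^ 2 * A6 + K2 ^ 2 * B6
      - 2 * K1 * C6 - 2 * K1 * K2 * D6) :
    IsLeast (Set.range fun p : ℝ × ℝ => M p.1 p.2)
      (Ybar ^ 2 - B6 * (Ybar ^ 2 + C6) ^ 2 / (B6 * (Ybar ^ 2 + A6) - D6 ^ 2)) ∧
    (Ybar ^ 2 + C6 ≠ 0 →
      Ybar ^ 2 - B6 * (Ybar ^ 2 + C6) ^ 2 / (B6 * (Ybar ^ 2 + A6) - D6 ^ 2)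
        < Ybar ^ 2) := by
  set Δ := B6 * (Ybar ^ 2 + A6) - D6 ^ 2 with hΔdef
  have hΔne : Δ ≠ 0 := ne_of_gt hΔ
  set γ := Ybar ^ 2 + C6 with hγ
  constructor
  · constructor
    · refine ⟨(B6 * γ / Δ, D6 * γ / Δ), ?_⟩
      simp only [hM]
      field_simp
      ring
    · rintro y ⟨⟨K1, K2⟩, rfl⟩
      simp only [hM]
      rw [sub_le_comm, le_div_iff₀ hΔ, hΔdef, hγ]
      nlinarith [mul_nonneg hΔ.le (sq_nonneg (B6 * K2 - D6 * K1)),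
        sq_nonneg ((B6 * (Ybar ^ 2 + A6) - D6 ^ 2) * K1 - B6 * (Ybar ^ 2 + C6)),
        hB, hΔdef]
  · intro hγne
    have : 0 < B6 * γ ^ 2 / Δ :=
      div_pos (mul_pos hB (by positivity)) hΔ
    linarith
end
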